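/- Let C and D be k-linear categories with finite-dimensional Hom spaces, let F : C → D be a fully faithful k-linear functor, and let σ_C, σ_D be k-linear endofunctors of C and D respectively such that F∘σ_C is naturally isomorphic to σ_D∘F. Then for all integers n ≥ 1 and m ≥ 0, fpdim^n(σ_C^m) ≤ fpdim^n(σ_D^m); in particular, for every brick set φ = {X_1,…,X_n} in C, the set F(φ) = {F(X_1),…,F(X_n)} is a brick set in D and ρ(A(φ, σ_C^m)) ≤ ρ(A(F(φ), σ_D^m)). -/

import Mathlib

open CategoryTheory CategoryTheory.Limits Filter
open scoped ENNReal Classical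

noncomputable section

/-- The spectral radius of a complex square matrix: the supremum of the moduli of its
eigenvalues (elements of its spectrum). -/
def specRad {ι : Type*} [Fintype ι] [DecidableEq ι] (M : Matrix ι ι ℂ) : ℝ :=
  sSup ((fun z : ℂ => ‖z‖) '' spectrum ℂ M)

variable (k : Type) [Field k]
section CatDefs

variable {C : Type*} [Category C] [Preadditive C] [CategoryTheory.Linear k C]

/-- A brick set: a finite family of objects with `dim Hom(X i, X j) = δ_{ij}`. -/
def IsBrickSet {n : ℕ} (φ : Fin n → C) : Prop :=
  ∀ i j, Module.finrank k (φ i ⟶ φ j) = if i = j then 1 else 0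

/-- The adjacency matrix of a family of objects with respect to an endofunctor `σ`:
its `(i,j)` entry is `dim_k Hom(X i, σ (X j))`. -/
def adjMat (σ : C ⥤ C) {n : ℕ} (φ : Fin n → C) : Matrix (Fin n) (Fin n) ℂ :=
  fun i j => (Module.finrank k (φ i ⟶ σ.obj (φ j)) : ℂ)

/-- The `n`-th Frobenius-Perron dimension of an endofunctor: the supremum of the spectral
radii of adjacency matrices of brick sets of size `n`. -/
def fpdimN (σ : C ⥤ C) (n : ℕ) : ℝ≥0∞ :=
  ⨆ (φ : Fin n → C) (_ : IsBrickSet k φ), ENNReal.ofReal (specRad (adjMat k σ φ))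

/-- The Frobenius-Perron dimension of an endofunctor (testing against brick sets). -/
def fpdim (σ : C ⥤ C) : ℝ≥0∞ := ⨆ n : ℕ, fpdimN k σ (n + 1)

end CatDefs

/-- The `m`-th power of an endofunctor. -/
def funPow {C : Type*} [Category C] (σ : C ⥤ C) : ℕ → (C ⥤ C)
  | 0 => 𝟭 C
  | m + 1 => funPow σ m ⋙ σ

/-- A fully faithful linear functor preserves Hom dimensions. -/
lemma finrank_hom_map
    {C : Type*} [Category C] [Preadditive C] [CategoryTheory.Linear k C]
    {D : Type*} [Category D] [Preadditive D] [CategoryTheory.Linear k D]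
    (F : C ⥤ D) [F.Full] [F.Faithful] [F.Additive] [F.Linear k] (X Y : C) :
    Module.finrank k (F.obj X ⟶ F.obj Y) = Module.finrank k (X ⟶ Y) := by
  have hbij : Function.Bijective (F.mapLinearMap (R := k) (X := X) (Y := Y)) :=
    ⟨fun a b h => F.map_injective h, fun g => F.map_surjective g⟩
  exact (LinearEquiv.finrank_eq (LinearEquiv.ofBijective _ hbij)).symm

/-- Theorem 0.1 / 3.2: if `F : C → D` is a fully faithful `k`-linear functor between
`k`-linear Hom-finite categories, and `σ_C`, `σ_D` are `k`-linear endofunctors with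
`F ∘ σ_C ≅ σ_D ∘ F`, then `fpdim^n(σ_C^m) ≤ fpdim^n(σ_D^m)` for all `n ≥ 1`, `m ≥ 0`;
moreover `F` carries brick sets to brick sets, and the corresponding spectral radii of
adjacency matrices only increase. -/
theorem fp_embedding
    {C : Type*} [Category C] [Preadditive C] [CategoryTheory.Linear k C]
    [∀ X Y : C, FiniteDimensional k (X ⟶ Y)]
    {D : Type*} [Category D] [Preadditive D] [CategoryTheory.Linear k D]
    [∀ X Y : D, FiniteDimensional k (X ⟶ Y)]
    (F : C ⥤ D) [F.Full] [F.Faithful] [F.Additive] [F.Linear k]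
    (σC : C ⥤ C) [σC.Additive] [σC.Linear k]
    (σD : D ⥤ D) [σD.Additive] [σD.Linear k]
    (e : σC ⋙ F ≅ F ⋙ σD) :
    (∀ (n m : ℕ), fpdimN k (funPow σC m) (n + 1) ≤ fpdimN k (funPow σD m) (n + 1)) ∧
    (∀ (n : ℕ) (φ : Fin n → C), IsBrickSet k φ →
      IsBrickSet k (fun i => F.obj (φ i)) ∧
      ∀ m : ℕ, specRad (adjMat k (funPow σC m) φ) ≤
        specRad (adjMat k (funPow σD m) (fun i => F.obj (φ i)))) := by
  -- object-level iso F(σC^m X) ≅ σD^m (F X)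
  have isoObj : ∀ (m : ℕ) (X : C),
      F.obj ((funPow σC m).obj X) ≅ (funPow σD m).obj (F.obj X) := by
    intro m
    induction m with
    | zero => intro X; exact Iso.refl _
    | succ m ih =>
      intro X
      exact (e.app ((funPow σC m).obj X)) ≪≫ σD.mapIso (ih X)
  -- equality of Hom dimensions
  have hdim : ∀ (m : ℕ) (X Y : C),
      Module.finrank k (X ⟶ (funPow σC m).obj Y) =
      Module.finrank k (F.obj X ⟶ (funPow σD m).obj (F.obj Y)) := by
    intro m X Y
    rw [← finrank_hom_map k F X ((funPow σC m).obj Y)]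
    exact LinearEquiv.finrank_eq
      (Linear.homCongr k (Iso.refl (F.obj X)) (isoObj m Y))
  -- brick sets are preserved
  have hbrick : ∀ (n : ℕ) (φ : Fin n → C), IsBrickSet k φ →
      IsBrickSet k (fun i => F.obj (φ i)) := by
    intro n φ hφ i j
    simpa [finrank_hom_map k F (φ i) (φ j)] using hφ i j
  -- adjacency matrices are equal
  have hmat : ∀ (m n : ℕ) (φ : Fin n → C),
      adjMat k (funPow σC m) φ = adjMat k (funPow σD m) (fun i => F.obj (φ i)) := by
    intro m n φ
    funext i j
    simp [adjMat, hdim m (φ i) (φ j)]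
  refine ⟨?_, fun n φ hφ => ⟨hbrick n φ hφ, fun m => by rw [hmat m n φ]⟩⟩
  intro n m
  refine iSup₂_le fun φ hφ => ?_
  refine le_iSup₂_of_le (fun i => F.obj (φ i)) (hbrick _ φ hφ) ?_
  rw [hmat m _ φ]
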